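/- arXiv:1005.5260 — 2 statements merged into one kernel-verified Lean document; each statement's English description precedes it below -/
import Mathlib

section
/- Let the increments be almost surely nonnegative, i.e., P{X ≥ 0} = 1, let β := P{X = 0} ∈ [0,1), and let a > 0. Then E[e^{a ρ(x)}] < ∞ for some x ≥ 0 if and only if E[e^{a ρ(x)}] < ∞ for every x ≥ 0, and this holds if and only if a < -log β (where -log β := ∞ when β = 0). -/
open MeasureTheory ProbabilityTheory Filter Set
open scoped ENNReal Topology

noncomputable section

/-- Partial sums of the increment sequence: the zero-delayed random walk
`S_0 = 0`, `S_n = X_0 + ⋯ + X_{n-1}`. -/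
def rwS {Ω : Type*} (X : ℕ → Ω → ℝ) (n : ℕ) (ω : Ω) : ℝ := ∑ i ∈ Finset.range n, X i ω

/-- First passage time `τ(x) = inf {n ∈ ℕ₀ : S_n > x}` into `(x, ∞)`,
with value `⊤` if the walk never exceeds `x`. -/
def firstPassage {Ω : Type*} (X : ℕ → Ω → ℝ) (x : ℝ) (ω : Ω) : ℕ∞ :=
  ⨅ (n : ℕ) (_ : x < rwS X n ω), (n : ℕ∞)

/-- Number of visits `N(x) = #{n ∈ ℕ : S_n ≤ x}` of the walk (after time 0) to `(-∞, x]`. -/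
def numVisits {Ω : Type*} (X : ℕ → Ω → ℝ) (x : ℝ) (ω : Ω) : ℕ∞ :=
  {n : ℕ | 1 ≤ n ∧ rwS X n ω ≤ x}.encard

/-- Last exit time `ρ(x)` from `(-∞, x]`: it is `sup {n ∈ ℕ : S_n ≤ x}` if
`inf_{n ≥ 1} S_n ≤ x` (the infimum taken in the extended reals), and `0` otherwise. -/
def lastExit {Ω : Type*} (X : ℕ → Ω → ℝ) (x : ℝ) (ω : Ω) : ℕ∞ :=
  if (⨅ (n : ℕ) (_ : 1 ≤ n), (rwS X n ω : EReal)) ≤ (x : EReal) then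
    ⨆ (n : ℕ) (_ : 1 ≤ n ∧ rwS X n ω ≤ x), (n : ℕ∞)
  else 0

/-- `e^{a n}` for `n : ℕ∞`, equal to `∞` when `n = ∞`. -/
def eexp (a : ℝ) (n : ℕ∞) : ℝ≥0∞ :=
  if n = ⊤ then ⊤ else ENNReal.ofReal (Real.exp (a * n.toNat))

/-- Exponential moment `E[e^{a T}]` (with values in `[0,∞]`) of an `ℕ∞`-valued random time. -/
def expMoment {Ω : Type*} [MeasurableSpace Ω] (P : Measure Ω) (a : ℝ) (T : Ω → ℕ∞) : ℝ≥0∞ :=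
  ∫⁻ ω, eexp a (T ω) ∂P

/-- Laplace transform `φ(t) = E e^{-tY}` with values in `[0,∞]`. -/
def laplace {Ω : Type*} [MeasurableSpace Ω] (P : Measure Ω) (Y : Ω → ℝ) (t : ℝ) : ℝ≥0∞ :=
  ∫⁻ ω, ENNReal.ofReal (Real.exp (-t * Y ω)) ∂P

/-- `R := -log inf_{t ≥ 0} E e^{-tY}`. -/
def Rconst {Ω : Type*} [MeasurableSpace Ω] (P : Measure Ω) (Y : Ω → ℝ) : ℝ :=
  -Real.log (⨅ t ∈ Set.Ici (0:ℝ), laplace P Y t).toReal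

/-- The law of `Y` under `P` is concentrated on the lattice `l·ℤ`. -/
def ConcOnLattice {Ω : Type*} [MeasurableSpace Ω] (P : Measure Ω) (Y : Ω → ℝ) (l : ℝ) : Prop :=
  P {ω | ∃ k : ℤ, Y ω = l * k} = 1

/-- The law of `Y` under `P` is non-lattice: it is not concentrated on any lattice `l·ℤ`, `l > 0`. -/
def NonLattice {Ω : Type*} [MeasurableSpace Ω] (P : Measure Ω) (Y : Ω → ℝ) : Prop :=
  ¬ ∃ l > (0:ℝ), ConcOnLattice P Y l

/-- The law of `Y` under `P` is lattice with span `l`: it is concentrated on `l·ℤ` and `l` is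
maximal with this property. -/
def LatticeSpan {Ω : Type*} [MeasurableSpace Ω] (P : Measure Ω) (Y : Ω → ℝ) (l : ℝ) : Prop :=
  0 < l ∧ ConcOnLattice P Y l ∧ ∀ l' > (0:ℝ), ConcOnLattice P Y l' → l' ≤ l

/-- The mean `E_γ[S_τ] = E[S_τ e^{aτ} e^{-γ S_τ}]` of `S_τ` under the exponentially tilted
measure, computed in `[0,∞]` (here `τ = τ(0)`; on `{τ = ∞}` the integrand is read as `0`). -/
def tiltedMeanStau {Ω : Type*} [MeasurableSpace Ω] (P : Measure Ω) (X : ℕ → Ω → ℝ)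
    (a γ : ℝ) : ℝ≥0∞ :=
  ∫⁻ ω, ENNReal.ofReal (rwS X (firstPassage X 0 ω).toNat ω *
    Real.exp (a * ((firstPassage X 0 ω).toNat : ℝ)) *
    Real.exp (-γ * rwS X (firstPassage X 0 ω).toNat ω)) ∂P

/-! ### Auxiliary material -/

/-- coefficient `e^{a(n+1)} - e^{an}` as an extended nonnegative real -/
def cf (a : ℝ) (n : ℕ) : ℝ≥0∞ := ENNReal.ofReal (Real.exp (a * (n+1)) - Real.exp (a * n))

lemma exp_mono_aux {a : ℝ} (ha : 0 < a) (n : ℕ) :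
    Real.exp (a * n) ≤ Real.exp (a * (n+1)) := by
  apply Real.exp_le_exp.2
  have : (n : ℝ) ≤ (n : ℝ) + 1 := by linarith
  nlinarith

lemma cf_sum {a : ℝ} (ha : 0 < a) (k : ℕ) :
    ∑ n ∈ Finset.range k, cf a n = ENNReal.ofReal (Real.exp (a * k) - 1) := by
  unfold cf
  rw [← ENNReal.ofReal_sum_of_nonneg (fun n _ => by
    have := exp_mono_aux ha n; push_cast; linarith)]
  congr 1
  have := Finset.sum_range_sub (f := fun n : ℕ => Real.exp (a * n)) k
  simp only [Nat.cast_zero, mul_zero, Real.exp_zero] at this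
  rw [← this]
  apply Finset.sum_congr rfl
  intro n _
  push_cast
  ring

lemma eexp_expand {a : ℝ} (ha : 0 < a) (m : ℕ∞) :
    eexp a m = 1 + ∑' n : ℕ, cf a n * (if ((n+1 : ℕ) : ℕ∞) ≤ m then 1 else 0) := by
  cases m with
  | top =>
    simp only [eexp, if_pos rfl, le_top, if_true, mul_one]
    rw [eq_comm, eq_top_iff]
    have hsum : ∀ k : ℕ, ENNReal.ofReal (Real.exp (a * k) - 1) ≤ ∑' n : ℕ, cf a n := by
      intro k
      rw [← cf_sum ha k]
      exact ENNReal.sum_le_tsum _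
    have htend : Tendsto (fun k : ℕ => ENNReal.ofReal (Real.exp (a * k) - 1)) atTop (𝓝 ⊤) := by
      apply ENNReal.tendsto_ofReal_atTop.comp
      apply Filter.tendsto_atTop_add_const_right
      apply Real.tendsto_exp_atTop.comp
      exact Tendsto.const_mul_atTop ha tendsto_natCast_atTop_atTop
    have := le_of_tendsto htend (Filter.Eventually.of_forall hsum)
    exact le_trans this le_add_self
  | coe k =>
    have h1 : eexp a (k : ℕ∞) = ENNReal.ofReal (Real.exp (a * k)) := by
      simp [eexp]
    rw [h1]
    have h2 : ∀ n : ℕ, ((n+1 : ℕ) : ℕ∞) ≤ (k : ℕ∞) ↔ n ∈ Finset.range k := by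
      intro n
      rw [Nat.cast_le, Finset.mem_range]
      omega
    rw [tsum_eq_sum (s := Finset.range k) (fun n hn => by
      rw [if_neg (fun hle => hn ((h2 n).1 hle)), mul_zero])]
    have : ∑ n ∈ Finset.range k, cf a n * (if ((n+1 : ℕ) : ℕ∞) ≤ (k:ℕ∞) then 1 else 0)
        = ∑ n ∈ Finset.range k, cf a n := by
      apply Finset.sum_congr rfl
      intro n hn
      rw [if_pos ((h2 n).2 hn), mul_one]
    rw [this, cf_sum ha]
    rw [← ENNReal.ofReal_one, ← ENNReal.ofReal_add (by norm_num)
      (by have := Real.one_le_exp (by positivity : (0:ℝ) ≤ a * k); linarith)]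
    congr 1
    ring

lemma rwS_mono {Ω : Type*} {X : ℕ → Ω → ℝ} {ω : Ω} (hω : ∀ i, 0 ≤ X i ω) :
    Monotone (fun n => rwS X n ω) := by
  intro m k hmk
  exact Finset.sum_le_sum_of_subset_of_nonneg (Finset.range_subset_range.2 hmk)
    (fun i _ _ => hω i)

lemma lastExit_level {Ω : Type*} {X : ℕ → Ω → ℝ} {ω : Ω} (hω : ∀ i, 0 ≤ X i ω)
    (x : ℝ) (n : ℕ) :
    ((n+1 : ℕ) : ℕ∞) ≤ lastExit X x ω ↔ rwS X (n+1) ω ≤ x := by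
  constructor
  · intro h
    unfold lastExit at h
    by_cases hc : (⨅ (m : ℕ) (_ : 1 ≤ m), (rwS X m ω : EReal)) ≤ (x : EReal)
    · rw [if_pos hc] at h
      by_contra hgt
      push_neg at hgt
      have hub : (⨆ (m : ℕ) (_ : 1 ≤ m ∧ rwS X m ω ≤ x), (m : ℕ∞)) ≤ (n : ℕ∞) := by
        apply iSup₂_le
        intro m hm
        rw [Nat.cast_le]
        by_contra hmn
        push_neg at hmn
        exact absurd (le_trans (rwS_mono hω (by omega : n+1 ≤ m)) hm.2) (not_le.2 hgt)
      have := le_trans h hub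
      rw [Nat.cast_le] at this
      omega
    · rw [if_neg hc] at h
      simp at h
  · intro h
    have hc : (⨅ (m : ℕ) (_ : 1 ≤ m), (rwS X m ω : EReal)) ≤ (x : EReal) := by
      refine le_trans (iInf₂_le (n+1) (by omega)) ?_
      exact_mod_cast h
    unfold lastExit
    rw [if_pos hc]
    exact le_iSup₂ (f := fun (m : ℕ) (_ : 1 ≤ m ∧ rwS X m ω ≤ x) => (m : ℕ∞)) (n+1) ⟨by omega, h⟩

lemma rwS_meas {Ω : Type*} [MeasurableSpace Ω] (X : ℕ → Ω → ℝ)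
    (hmeas : ∀ i, Measurable (X i)) (n : ℕ) : Measurable (rwS X n) :=
  Finset.measurable_sum _ (fun i _ => hmeas i)

/-- the Laplace-type transform of the increment -/
def Lap {Ω : Type*} [MeasurableSpace Ω] (P : Measure Ω) (X : ℕ → Ω → ℝ) (θ : ℝ) : ℝ≥0∞ :=
  ∫⁻ ω, ENNReal.ofReal (Real.exp (-θ * X 0 ω)) ∂P

lemma meas_aux (θ : ℝ) : Measurable (fun y : ℝ => ENNReal.ofReal (Real.exp (-θ * y))) :=
  ENNReal.measurable_ofReal.comp (Real.measurable_exp.comp (measurable_const.mul measurable_id))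

lemma lap_pow {Ω : Type*} [MeasurableSpace Ω] (P : Measure Ω) [IsProbabilityMeasure P]
    (X : ℕ → Ω → ℝ) (hmeas : ∀ i, Measurable (X i))
    (hindep : iIndepFun X P)
    (hident : ∀ i, P.map (X i) = P.map (X 0)) (θ : ℝ) (n : ℕ) :
    ∫⁻ ω, ENNReal.ofReal (Real.exp (-θ * rwS X n ω)) ∂P = Lap P X θ ^ n := by
  induction n with
  | zero => simp [rwS, Lap]
  | succ n ih =>
    have heq : ∀ ω, ENNReal.ofReal (Real.exp (-θ * rwS X (n+1) ω)) =
        ENNReal.ofReal (Real.exp (-θ * rwS X n ω)) * ENNReal.ofReal (Real.exp (-θ * X n ω)) := by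
      intro ω
      rw [← ENNReal.ofReal_mul (Real.exp_nonneg _), ← Real.exp_add]
      have : rwS X (n+1) ω = rwS X n ω + X n ω := by simp [rwS, Finset.sum_range_succ]
      rw [this]; ring_nf
    simp_rw [heq]
    have hind : IndepFun (rwS X n) (X n) P := by
      have := hindep.indepFun_sum_range_succ hmeas n
      convert this using 2
      ext ω
      simp [rwS]
    have hind2 : IndepFun (fun ω => ENNReal.ofReal (Real.exp (-θ * rwS X n ω)))
        (fun ω => ENNReal.ofReal (Real.exp (-θ * X n ω))) P := by
      simpa [Function.comp_def] using hind.comp (meas_aux θ) (meas_aux θ)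
    rw [lintegral_mul_eq_lintegral_mul_lintegral_of_indepFun''
      (f := fun ω => ENNReal.ofReal (Real.exp (-θ * rwS X n ω)))
      (g := fun ω => ENNReal.ofReal (Real.exp (-θ * X n ω)))
      (((meas_aux θ).comp (rwS_meas X hmeas n)).aemeasurable)
      (((meas_aux θ).comp (hmeas n)).aemeasurable) hind2, ih]
    have hlast : ∫⁻ ω, ENNReal.ofReal (Real.exp (-θ * X n ω)) ∂P = Lap P X θ := by
      unfold Lap
      rw [← lintegral_map (meas_aux θ) (hmeas n), hident n,
        lintegral_map (meas_aux θ) (hmeas 0)]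
    rw [hlast, pow_succ]

lemma markov_bound {Ω : Type*} [MeasurableSpace Ω] (P : Measure Ω) [IsProbabilityMeasure P]
    (X : ℕ → Ω → ℝ) (hmeas : ∀ i, Measurable (X i)) (x θ : ℝ) (hθ : 0 ≤ θ) (n : ℕ)
    (hpow : ∫⁻ ω, ENNReal.ofReal (Real.exp (-θ * rwS X n ω)) ∂P = Lap P X θ ^ n) :
    P {ω | rwS X n ω ≤ x} ≤ ENNReal.ofReal (Real.exp (θ * x)) * Lap P X θ ^ n := by
  have hsub : {ω | rwS X n ω ≤ x} ⊆
      {ω | ENNReal.ofReal (Real.exp (-θ * x)) ≤ ENNReal.ofReal (Real.exp (-θ * rwS X n ω))} := by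
    intro ω hω
    simp only [mem_setOf_eq] at *
    apply ENNReal.ofReal_le_ofReal
    apply Real.exp_le_exp.2
    nlinarith
  have hm := mul_meas_ge_le_lintegral₀ (μ := P)
    (f := fun ω => ENNReal.ofReal (Real.exp (-θ * rwS X n ω)))
    ((ENNReal.measurable_ofReal.comp (Real.measurable_exp.comp
      (measurable_const.mul (Finset.measurable_sum _ (fun i _ => hmeas i))))).aemeasurable)
    (ENNReal.ofReal (Real.exp (-θ * x)))
  rw [hpow] at hm
  have h1 : P {ω | rwS X n ω ≤ x} ≤
      P {ω | ENNReal.ofReal (Real.exp (-θ * x)) ≤ ENNReal.ofReal (Real.exp (-θ * rwS X n ω))} :=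
    measure_mono hsub
  have hne : ENNReal.ofReal (Real.exp (-θ * x)) ≠ 0 := by
    simp [ENNReal.ofReal_eq_zero, not_le, Real.exp_pos]
  have hnetop : ENNReal.ofReal (Real.exp (-θ * x)) ≠ ⊤ := ENNReal.ofReal_ne_top
  calc P {ω | rwS X n ω ≤ x}
      ≤ P {ω | ENNReal.ofReal (Real.exp (-θ * x)) ≤ ENNReal.ofReal (Real.exp (-θ * rwS X n ω))} := h1
    _ ≤ (ENNReal.ofReal (Real.exp (-θ * x)))⁻¹ * Lap P X θ ^ n := by
        exact (ENNReal.mul_le_iff_le_inv hne hnetop).1 hm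
    _ = ENNReal.ofReal (Real.exp (θ * x)) * Lap P X θ ^ n := by
        congr 1
        rw [← ENNReal.ofReal_inv_of_pos (Real.exp_pos _), ← Real.exp_neg]
        ring_nf

lemma beta_pow_le {Ω : Type*} [MeasurableSpace Ω] (P : Measure Ω) [IsProbabilityMeasure P]
    (X : ℕ → Ω → ℝ) (hmeas : ∀ i, Measurable (X i))
    (hindep : iIndepFun X P)
    (hident : ∀ i, P.map (X i) = P.map (X 0))
    (x : ℝ) (hx : 0 ≤ x) (n : ℕ) :
    (P {ω | X 0 ω = 0}) ^ n ≤ P {ω | rwS X n ω ≤ x} := by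
  have hsub : (⋂ i ∈ Finset.range n, X i ⁻¹' {0}) ⊆ {ω | rwS X n ω ≤ x} := by
    intro ω hω
    simp only [Set.mem_iInter, Set.mem_preimage, Set.mem_singleton_iff] at hω
    have : rwS X n ω = 0 := Finset.sum_eq_zero (fun i hi => hω i hi)
    simp [Set.mem_setOf_eq, this, hx]
  refine le_trans (le_of_eq ?_) (measure_mono hsub)
  rw [hindep.meas_biInter (fun i _ => ⟨{0}, measurableSet_singleton 0, rfl⟩)]
  have : ∀ i, P (X i ⁻¹' {0}) = P {ω | X 0 ω = 0} := by
    intro i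
    rw [← Measure.map_apply (hmeas i) (measurableSet_singleton 0), hident i,
      Measure.map_apply (hmeas 0) (measurableSet_singleton 0)]
    rfl
  rw [Finset.prod_congr rfl (fun i _ => this i), Finset.prod_const, Finset.card_range]

lemma lap_tendsto {Ω : Type*} [MeasurableSpace Ω] (P : Measure Ω) [IsProbabilityMeasure P]
    (X : ℕ → Ω → ℝ) (hmeas : ∀ i, Measurable (X i))
    (hnonneg : ∀ᵐ ω ∂P, 0 ≤ X 0 ω) :
    Tendsto (fun k : ℕ => Lap P X k) atTop (𝓝 (P {ω | X 0 ω = 0})) := by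
  have hset : MeasurableSet {ω | X 0 ω = 0} := (hmeas 0) (measurableSet_singleton 0)
  have hβ : P {ω | X 0 ω = 0} =
      ∫⁻ ω, Set.indicator {ω | X 0 ω = 0} (fun _ => (1:ℝ≥0∞)) ω ∂P := by
    rw [lintegral_indicator hset _]; simp
  rw [hβ]
  apply tendsto_lintegral_of_dominated_convergence (bound := fun _ => (1:ℝ≥0∞))
  · intro k
    exact ENNReal.measurable_ofReal.comp (Real.measurable_exp.comp
      (measurable_const.mul (hmeas 0)))
  · intro k
    filter_upwards [hnonneg] with ω hω
    rw [← ENNReal.ofReal_one]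
    apply ENNReal.ofReal_le_ofReal
    rw [← Real.exp_zero]
    apply Real.exp_le_exp.2
    have : (0:ℝ) ≤ k := Nat.cast_nonneg k
    nlinarith
  · simp
  · filter_upwards [hnonneg] with ω hω
    rcases lt_or_eq_of_le hω with hpos | hzero
    · have h0 : ω ∉ {ω | X 0 ω = 0} := by simp [Set.mem_setOf_eq]; linarith
      rw [Set.indicator_of_notMem h0]
      have : Tendsto (fun k : ℕ => Real.exp (-(k:ℝ) * X 0 ω)) atTop (𝓝 0) := by
        apply Real.tendsto_exp_atBot.comp
        apply Filter.Tendsto.atBot_mul_const hpos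
        exact tendsto_neg_atBot_iff.2 tendsto_natCast_atTop_atTop
      have := (ENNReal.continuous_ofReal.tendsto 0).comp this
      simpa [Function.comp_def] using this
    · have h0 : ω ∈ {ω | X 0 ω = 0} := by simp [Set.mem_setOf_eq, ← hzero]
      rw [Set.indicator_of_mem h0]
      have : ∀ k : ℕ, ENNReal.ofReal (Real.exp (-(k:ℝ) * X 0 ω)) = 1 := by
        intro k; rw [← hzero]; simp
      simp_rw [this]
      exact tendsto_const_nhds

/-- main formula: the exponential moment as a series -/
lemma expMoment_formula {Ω : Type*} [MeasurableSpace Ω] (P : Measure Ω) [IsProbabilityMeasure P]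
    (X : ℕ → Ω → ℝ) (hmeas : ∀ i, Measurable (X i))
    (hA : ∀ᵐ ω ∂P, ∀ i, 0 ≤ X i ω) {a : ℝ} (ha : 0 < a) (x : ℝ) :
    expMoment P a (lastExit X x) = 1 + ∑' n : ℕ, cf a n * P {ω | rwS X (n+1) ω ≤ x} := by
  have hsetm : ∀ n : ℕ, MeasurableSet {ω | rwS X (n+1) ω ≤ x} := fun n =>
    measurableSet_le (rwS_meas X hmeas (n+1)) measurable_const
  have hAe : ∀ᵐ ω ∂P, eexp a (lastExit X x ω) =
      1 + ∑' n : ℕ, cf a n *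
        Set.indicator {ω' | rwS X (n+1) ω' ≤ x} (fun _ => (1:ℝ≥0∞)) ω := by
    filter_upwards [hA] with ω hω
    rw [eexp_expand ha]
    congr 1
    apply tsum_congr
    intro n
    congr 1
    rw [Set.indicator_apply]
    exact if_congr (lastExit_level hω x n) rfl rfl
  unfold expMoment
  rw [lintegral_congr_ae hAe, lintegral_add_left measurable_const, lintegral_const,
    measure_univ, mul_one]
  congr 1
  rw [lintegral_tsum (fun n => ((measurable_const.indicator (hsetm n)).const_mul _).aemeasurable)]
  apply tsum_congr
  intro n
  rw [lintegral_const_mul _ (measurable_const.indicator (hsetm n)), lintegral_indicator (hsetm n) _]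
  simp

/-- finiteness direction -/
lemma expMoment_lt_top {Ω : Type*} [MeasurableSpace Ω] (P : Measure Ω) [IsProbabilityMeasure P]
    (X : ℕ → Ω → ℝ) (hmeas : ∀ i, Measurable (X i))
    (hindep : iIndepFun X P)
    (hident : ∀ i, P.map (X i) = P.map (X 0))
    (hA : ∀ᵐ ω ∂P, ∀ i, 0 ≤ X i ω) {a : ℝ} (ha : 0 < a)
    (hlt : P {ω | X 0 ω = 0} * ENNReal.ofReal (Real.exp a) < 1)
    (x : ℝ) (hx : 0 ≤ x) :
    expMoment P a (lastExit X x) < ⊤ := by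
  have hc0 : ENNReal.ofReal (Real.exp a) ≠ 0 := by
    simp [ENNReal.ofReal_eq_zero, not_le, Real.exp_pos]
  have hctop : ENNReal.ofReal (Real.exp a) ≠ ⊤ := ENNReal.ofReal_ne_top
  -- find θ with Lap < e^{-a}
  have hβlt : P {ω | X 0 ω = 0} < ENNReal.ofReal (Real.exp (-a)) := by
    rw [← ENNReal.mul_lt_mul_iff_left hc0 hctop]
    calc P {ω | X 0 ω = 0} * ENNReal.ofReal (Real.exp a) < 1 := hlt
      _ = ENNReal.ofReal (Real.exp (-a)) * ENNReal.ofReal (Real.exp a) := by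
          rw [← ENNReal.ofReal_mul (Real.exp_nonneg _), ← Real.exp_add]
          simp
  have hnonneg0 : ∀ᵐ ω ∂P, 0 ≤ X 0 ω := by
    filter_upwards [hA] with ω hω using hω 0
  obtain ⟨θ, hθ⟩ := ((lap_tendsto P X hmeas hnonneg0).eventually_lt_const hβlt).exists
  set L := Lap P X (θ : ℝ) with hL
  set r := ENNReal.ofReal (Real.exp a) * L with hr
  have hrlt : r < 1 := by
    calc r < ENNReal.ofReal (Real.exp a) * ENNReal.ofReal (Real.exp (-a)) := by
          rw [hr]
          exact ENNReal.mul_lt_mul_right hc0 hctop hθ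
      _ = 1 := by
          rw [← ENNReal.ofReal_mul (Real.exp_nonneg _), ← Real.exp_add]
          simp
  -- term bound
  have hterm : ∀ n : ℕ, cf a n * P {ω | rwS X (n+1) ω ≤ x} ≤
      ENNReal.ofReal (Real.exp ((θ:ℝ) * x)) * r ^ (n+1) := by
    intro n
    have hM := markov_bound P X hmeas x (θ : ℝ) (Nat.cast_nonneg θ) (n+1)
      (lap_pow P X hmeas hindep hident (θ:ℝ) (n+1))
    have hcf : cf a n ≤ (ENNReal.ofReal (Real.exp a)) ^ (n+1) := by
      unfold cf
      calc ENNReal.ofReal (Real.exp (a * (n+1)) - Real.exp (a * n))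
          ≤ ENNReal.ofReal (Real.exp (a * (n+1))) :=
            ENNReal.ofReal_le_ofReal (by have := Real.exp_pos (a * n); linarith)
        _ = (ENNReal.ofReal (Real.exp a)) ^ (n+1) := by
            rw [← ENNReal.ofReal_pow (Real.exp_nonneg _), ← Real.exp_nat_mul]
            congr 1
            push_cast
            ring
    calc cf a n * P {ω | rwS X (n+1) ω ≤ x}
        ≤ (ENNReal.ofReal (Real.exp a)) ^ (n+1) *
          (ENNReal.ofReal (Real.exp ((θ:ℝ) * x)) * L ^ (n+1)) := mul_le_mul' hcf hM
      _ = ENNReal.ofReal (Real.exp ((θ:ℝ) * x)) * r ^ (n+1) := by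
          rw [hr, mul_pow]
          ring
  rw [expMoment_formula P X hmeas hA ha x]
  apply ENNReal.add_lt_top.2
  constructor
  · exact ENNReal.one_lt_top
  · calc ∑' n : ℕ, cf a n * P {ω | rwS X (n+1) ω ≤ x}
        ≤ ∑' n : ℕ, ENNReal.ofReal (Real.exp ((θ:ℝ) * x)) * r ^ (n+1) :=
          ENNReal.tsum_le_tsum hterm
      _ = ENNReal.ofReal (Real.exp ((θ:ℝ) * x)) * (r * (1 - r)⁻¹) := by
          rw [ENNReal.tsum_mul_left, ENNReal.tsum_geometric_add_one]
      _ < ⊤ := ENNReal.mul_lt_top ENNReal.ofReal_lt_top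
          (ENNReal.mul_lt_top (hrlt.trans ENNReal.one_lt_top)
            (ENNReal.inv_lt_top.2 (tsub_pos_of_lt hrlt)))

/-- divergence direction -/
lemma expMoment_eq_top {Ω : Type*} [MeasurableSpace Ω] (P : Measure Ω) [IsProbabilityMeasure P]
    (X : ℕ → Ω → ℝ) (hmeas : ∀ i, Measurable (X i))
    (hindep : iIndepFun X P)
    (hident : ∀ i, P.map (X i) = P.map (X 0))
    (hA : ∀ᵐ ω ∂P, ∀ i, 0 ≤ X i ω) {a : ℝ} (ha : 0 < a)
    (hge : 1 ≤ P {ω | X 0 ω = 0} * ENNReal.ofReal (Real.exp a))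
    (x : ℝ) (hx : 0 ≤ x) :
    expMoment P a (lastExit X x) = ⊤ := by
  set β := P {ω | X 0 ω = 0} with hβ
  set δ := ENNReal.ofReal (1 - Real.exp (-a)) with hδ
  have hδ0 : δ ≠ 0 := by
    rw [hδ]
    simp only [ne_eq, ENNReal.ofReal_eq_zero, not_le, sub_pos]
    exact Real.exp_lt_one_iff.2 (by linarith)
  have hterm : ∀ n : ℕ, δ ≤ cf a n * P {ω | rwS X (n+1) ω ≤ x} := by
    intro n
    have hβn : β ^ (n+1) ≤ P {ω | rwS X (n+1) ω ≤ x} :=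
      beta_pow_le P X hmeas hindep hident x hx (n+1)
    have hcf : cf a n = (ENNReal.ofReal (Real.exp a)) ^ (n+1) * δ := by
      unfold cf
      rw [hδ, ← ENNReal.ofReal_pow (Real.exp_nonneg _),
        ← ENNReal.ofReal_mul (by positivity), ← Real.exp_nat_mul]
      congr 1
      rw [mul_sub, mul_one, ← Real.exp_add]
      push_cast
      ring_nf
    calc δ = 1 * δ := (one_mul δ).symm
      _ ≤ (β * ENNReal.ofReal (Real.exp a)) ^ (n+1) * δ := by
          refine mul_le_mul' ?_ (le_refl δ)
          calc (1:ℝ≥0∞) = 1 ^ (n+1) := (one_pow _).symm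
            _ ≤ (β * ENNReal.ofReal (Real.exp a)) ^ (n+1) := pow_le_pow_left₀ (by positivity) hge _
      _ = (ENNReal.ofReal (Real.exp a)) ^ (n+1) * δ * β ^ (n+1) := by
          rw [mul_pow]; ring
      _ ≤ cf a n * P {ω | rwS X (n+1) ω ≤ x} := by
          rw [hcf]
          exact mul_le_mul' (le_refl _) hβn
  rw [expMoment_formula P X hmeas hA ha x]
  have htop : ∑' _ : ℕ, δ = (⊤ : ℝ≥0∞) := ENNReal.tsum_const_eq_top_of_ne_zero hδ0
  have : (⊤ : ℝ≥0∞) ≤ ∑' n : ℕ, cf a n * P {ω | rwS X (n+1) ω ≤ x} := by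
    rw [← htop]
    exact ENNReal.tsum_le_tsum hterm
  rw [eq_top_iff]
  exact le_trans this le_add_self
/-- For a random walk with a.s. nonnegative i.i.d. increments with
`β := P{X = 0} < 1` and `a > 0`, `E e^{aρ(x)} < ∞` for some `x ≥ 0` iff for every `x ≥ 0`,
iff `a < -log β` (with `-log 0 := ∞`). -/
theorem exp_moment_lastExit_nonneg_increments
    {Ω : Type*} [MeasurableSpace Ω] (P : Measure Ω) [IsProbabilityMeasure P]
    (X : ℕ → Ω → ℝ) (hmeas : ∀ i, Measurable (X i))
    (hindep : iIndepFun X P)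
    (hident : ∀ i, P.map (X i) = P.map (X 0))
    (hnonneg : P {ω | 0 ≤ X 0 ω} = 1)
    (hβlt : P {ω | X 0 ω = 0} < 1)
    (a : ℝ) (ha : 0 < a) :
    ((∃ x ≥ (0:ℝ), expMoment P a (lastExit X x) < ⊤) ↔
      ((P {ω | X 0 ω = 0}).toReal = 0 ∨ a < -Real.log (P {ω | X 0 ω = 0}).toReal)) ∧
    ((∀ x ≥ (0:ℝ), expMoment P a (lastExit X x) < ⊤) ↔
      ((P {ω | X 0 ω = 0}).toReal = 0 ∨ a < -Real.log (P {ω | X 0 ω = 0}).toReal)) := by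
  set β := P {ω | X 0 ω = 0} with hβdef
  have hβtop : β ≠ ⊤ := (lt_of_lt_of_le hβlt le_top).ne
  set b := β.toReal with hbdef
  have hb0 : 0 ≤ b := ENNReal.toReal_nonneg
  have hb1 : b < 1 := by
    rw [hbdef, ← ENNReal.toReal_one]
    exact (ENNReal.toReal_lt_toReal hβtop ENNReal.one_ne_top).2 hβlt
  have hβb : β = ENNReal.ofReal b := (ENNReal.ofReal_toReal hβtop).symm
  -- the condition in ENNReal form
  have hcond : (b = 0 ∨ a < -Real.log b) ↔ β * ENNReal.ofReal (Real.exp a) < 1 := by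
    rw [hβb, ← ENNReal.ofReal_mul hb0, ← ENNReal.ofReal_one]
    rw [ENNReal.ofReal_lt_ofReal_iff (by norm_num)]
    constructor
    · rintro (h0 | hlog)
      · rw [h0]; norm_num
      · rcases eq_or_lt_of_le hb0 with h0 | hbpos
        · rw [← h0]; norm_num
        · have : Real.exp a < Real.exp (-Real.log b) := Real.exp_lt_exp.2 hlog
          rw [Real.exp_neg, Real.exp_log hbpos] at this
          calc b * Real.exp a < b * b⁻¹ := by
                apply mul_lt_mul_of_pos_left this hbpos
            _ = 1 := mul_inv_cancel₀ (ne_of_gt hbpos)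
    · intro hlt
      rcases eq_or_lt_of_le hb0 with h0 | hbpos
      · exact Or.inl h0.symm
      · right
        rw [← Real.exp_lt_exp, Real.exp_neg, Real.exp_log hbpos]
        have h2 : Real.exp a < 1 / b := by
          rw [lt_div_iff₀ hbpos]
          calc Real.exp a * b = b * Real.exp a := mul_comm _ _
            _ < 1 := hlt
        simpa [one_div] using h2
  -- a.e. nonnegativity of all increments
  have hA : ∀ᵐ ω ∂P, ∀ i, 0 ≤ X i ω := by
    rw [ae_all_iff]
    intro i
    have hset : MeasurableSet {ω | 0 ≤ X i ω} := measurableSet_le measurable_const (hmeas i)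
    have h1 : P {ω | 0 ≤ X i ω} = 1 := by
      have : {ω | 0 ≤ X i ω} = X i ⁻¹' (Set.Ici 0) := rfl
      rw [this, ← Measure.map_apply (hmeas i) measurableSet_Ici, hident i,
        Measure.map_apply (hmeas 0) measurableSet_Ici]
      exact hnonneg
    have := prob_compl_eq_zero_iff hset |>.2 h1
    rw [ae_iff]
    exact this
  -- two main implications
  have hFIN : β * ENNReal.ofReal (Real.exp a) < 1 →
      ∀ x ≥ (0:ℝ), expMoment P a (lastExit X x) < ⊤ := fun hlt x hx =>
    expMoment_lt_top P X hmeas hindep hident hA ha hlt x hx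
  have hDIV : ¬ (β * ENNReal.ofReal (Real.exp a) < 1) →
      ∀ x ≥ (0:ℝ), expMoment P a (lastExit X x) = ⊤ := by
    intro hge x hx
    exact expMoment_eq_top P X hmeas hindep hident hA ha (not_lt.1 hge) x hx
  constructor
  · constructor
    · rintro ⟨x, hx, hfin⟩
      rw [hcond]
      by_contra hge
      rw [hDIV hge x hx] at hfin
      exact absurd hfin (lt_irrefl ⊤)
    · intro hC
      exact ⟨0, le_refl 0, hFIN (hcond.1 hC) 0 (le_refl 0)⟩
  · constructor
    · intro hall
      rw [hcond]
      by_contra hge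
      have h1 := hDIV hge 0 (le_refl 0)
      have h2 := hall 0 (le_refl 0)
      rw [h1] at h2
      exact absurd h2 (lt_irrefl ⊤)
    · intro hC
      exact hFIN (hcond.1 hC)
end
end

section
/- Suppose S_n → ∞ almost surely. Then for every x ≥ 0 and every n ∈ ℕ_0, P{ρ(x) = n} = ∫_{(-∞, x]} P{inf_{k ≥ 1} S_k > x - y} P{S_n ∈ dy}; in particular P{ρ(x) = n} ≤ P{S_n ≤ x}. Moreover, for every a > 0 and x ≥ 0, E[e^{a τ(x)}] = 1 + (e^a - 1) Σ_{n ≥ 0} e^{an} P{max_{0 ≤ k ≤ n} S_k ≤ x} (both sides possibly infinite). -/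
open MeasureTheory ProbabilityTheory Filter Set
open scoped ENNReal Topology

noncomputable section

section AuxLemmas

variable {Ω : Type*} [MeasurableSpace Ω] {P : Measure Ω} [IsProbabilityMeasure P]
  {X : ℕ → Ω → ℝ}

set_option linter.unusedSectionVars false

lemma rwS_measurable (hmeas : ∀ i, Measurable (X i)) (n : ℕ) :
    Measurable (rwS X n) :=
  Finset.measurable_sum _ fun i _ => hmeas i

lemma firstPassage_le_iff {X : ℕ → Ω → ℝ} {x : ℝ} {ω : Ω} {n : ℕ} :
    firstPassage X x ω ≤ (n : ℕ∞) ↔ ∃ k ≤ n, x < rwS X k ω := by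
  constructor
  · intro h
    by_contra hc
    push_neg at hc
    have : ((n + 1 : ℕ) : ℕ∞) ≤ firstPassage X x ω := by
      refine le_iInf₂ fun k hk => ?_
      have : n < k := by
        by_contra hkn
        exact absurd hk (not_lt.mpr (hc k (not_lt.mp hkn)))
      exact_mod_cast this
    have := this.trans h
    exact absurd (Nat.cast_le.mp this) (by omega)
  · rintro ⟨k, hk, hx⟩
    exact (iInf₂_le k hx).trans (by exact_mod_cast hk)

lemma lt_firstPassage_iff {X : ℕ → Ω → ℝ} {x : ℝ} {ω : Ω} {n : ℕ} :
    (n : ℕ∞) < firstPassage X x ω ↔ ∀ k ≤ n, rwS X k ω ≤ x := by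
  rw [lt_iff_not_ge, firstPassage_le_iff]
  push_neg
  rfl

lemma lastExit_eq_iff {X : ℕ → Ω → ℝ} {x : ℝ} (hx : 0 ≤ x) {ω : Ω} {n : ℕ} :
    lastExit X x ω = (n : ℕ∞) ↔
      rwS X n ω ≤ x ∧ ∀ k, 1 ≤ k → x < rwS X (n + k) ω := by
  unfold lastExit
  rcases Nat.eq_zero_or_pos n with rfl | hn
  · have h0 : rwS X 0 ω = 0 := by simp [rwS]
    constructor
    · intro h
      refine ⟨by simp [h0, hx], fun k hk => ?_⟩
      by_contra hc
      push_neg at hc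
      rw [zero_add] at hc
      have hcond : (⨅ (m : ℕ) (_ : 1 ≤ m), (rwS X m ω : EReal)) ≤ (x : EReal) :=
        (iInf₂_le k hk).trans (EReal.coe_le_coe_iff.mpr hc)
      rw [if_pos hcond] at h
      have hk0 : ((k : ℕ∞)) ≤ ((0 : ℕ) : ℕ∞) :=
        h ▸ le_iSup₂ (f := fun (m : ℕ) (_ : 1 ≤ m ∧ rwS X m ω ≤ x) => (m : ℕ∞)) k ⟨hk, hc⟩
      exact absurd (Nat.cast_le.mp hk0) (by omega)
    · rintro ⟨-, hall⟩
      have hempty : ∀ m : ℕ, ¬(1 ≤ m ∧ rwS X m ω ≤ x) := by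
        rintro m ⟨hm, hle⟩
        have := hall m hm
        rw [zero_add] at this
        exact absurd hle (not_le.mpr this)
      split_ifs with h
      · simp only [Nat.cast_zero]
        exact le_antisymm (iSup₂_le fun m hm => absurd hm (hempty m)) zero_le
      · simp
  · constructor
    · intro h
      have hne : (0 : ℕ∞) ≠ (n : ℕ∞) := by
        intro hc
        rw [eq_comm, Nat.cast_eq_zero] at hc
        omega
      split_ifs at h with hcond
      swap
      · exact absurd h hne
      -- h : ⨆ ... = n
      have hSn : rwS X n ω ≤ x := by
        by_contra hc
        push_neg at hc
        -- every member of the index set is < n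
        have hub : (⨆ (m : ℕ) (_ : 1 ≤ m ∧ rwS X m ω ≤ x), (m : ℕ∞)) ≤ ((n - 1 : ℕ) : ℕ∞) := by
          refine iSup₂_le fun m hm => ?_
          have hmn : m ≠ n := fun he => absurd (he ▸ hm.2) (not_le.mpr hc)
          have hmlt : m < n := by
            by_contra hge
            push_neg at hge
            have : (m : ℕ∞) ≤ (n : ℕ∞) :=
              h ▸ le_iSup₂ (f := fun (m : ℕ) (_ : 1 ≤ m ∧ rwS X m ω ≤ x) => (m : ℕ∞)) m hm
            have := Nat.cast_le.mp this
            omega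
          exact_mod_cast (by omega : m ≤ n - 1)
        rw [h] at hub
        have := Nat.cast_le.mp hub
        omega
      refine ⟨hSn, fun k hk => ?_⟩
      by_contra hc
      push_neg at hc
      have : ((n + k : ℕ) : ℕ∞) ≤ (n : ℕ∞) :=
        h ▸ le_iSup₂ (f := fun (m : ℕ) (_ : 1 ≤ m ∧ rwS X m ω ≤ x) => (m : ℕ∞)) (n + k) ⟨by omega, hc⟩
      have := Nat.cast_le.mp this
      omega
    · rintro ⟨hSn, hall⟩
      have hcond : (⨅ (m : ℕ) (_ : 1 ≤ m), (rwS X m ω : EReal)) ≤ (x : EReal) :=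
        (iInf₂_le n hn).trans (EReal.coe_le_coe_iff.mpr hSn)
      rw [if_pos hcond]
      refine le_antisymm (iSup₂_le fun m hm => ?_)
        (le_iSup₂ (f := fun (m : ℕ) (_ : 1 ≤ m ∧ rwS X m ω ≤ x) => (m : ℕ∞)) n ⟨hn, hSn⟩)
      have : m ≤ n := by
        by_contra hc
        push_neg at hc
        have := hall (m - n) (by omega)
        rw [show n + (m - n) = m by omega] at this
        exact absurd hm.2 (not_le.mpr this)
      exact_mod_cast this


lemma exp_sub_one_pos {a : ℝ} (ha : 0 < a) : 0 < Real.exp a - 1 := by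
  have : (1 : ℝ) < Real.exp a := by
    calc (1:ℝ) = Real.exp 0 := Real.exp_zero.symm
    _ < Real.exp a := Real.exp_lt_exp.mpr ha
  linarith

lemma geom_sum_exp (a : ℝ) (ha : 0 < a) (m : ℕ) :
    ENNReal.ofReal (Real.exp (a * m)) =
      1 + ENNReal.ofReal (Real.exp a - 1) *
        ∑ n ∈ Finset.range m, ENNReal.ofReal (Real.exp (a * n)) := by
  have h1 : (0:ℝ) ≤ Real.exp a - 1 := (exp_sub_one_pos ha).le
  induction m with
  | zero => simp
  | succ m ih =>
    rw [Finset.sum_range_succ, mul_add, ← add_assoc, ← ih,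
      ← ENNReal.ofReal_mul h1,
      ← ENNReal.ofReal_add (Real.exp_nonneg _) (mul_nonneg h1 (Real.exp_nonneg _))]
    congr 1
    rw [Nat.cast_succ, show a * (m + 1 : ℝ) = a * m + a by ring, Real.exp_add]
    ring

lemma eexp_eq (a : ℝ) (ha : 0 < a) (t : ℕ∞) :
    eexp a t = 1 + ENNReal.ofReal (Real.exp a - 1) *
      ∑' n : ℕ, (if (n : ℕ∞) < t then ENNReal.ofReal (Real.exp (a * n)) else 0) := by
  have hc : ENNReal.ofReal (Real.exp a - 1) ≠ 0 := by
    rw [Ne, ENNReal.ofReal_eq_zero, not_le]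
    exact exp_sub_one_pos ha
  cases t with
  | top =>
    have htop : (∑' n : ℕ, (if (n : ℕ∞) < ⊤ then ENNReal.ofReal (Real.exp (a * n)) else 0)) = ⊤ := by
      refine top_le_iff.mp ?_
      calc (⊤ : ℝ≥0∞) = ∑' _ : ℕ, (1 : ℝ≥0∞) :=
            (ENNReal.tsum_const_eq_top_of_ne_zero one_ne_zero).symm
        _ ≤ _ := by
            refine ENNReal.tsum_le_tsum fun n => ?_
            rw [if_pos (lt_top_iff_ne_top.mpr (by exact_mod_cast WithTop.coe_ne_top))]
            rw [← ENNReal.ofReal_one]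
            exact ENNReal.ofReal_le_ofReal (Real.one_le_exp (by positivity))
    rw [htop, ENNReal.mul_top hc]
    simp [eexp]
  | coe m =>
    have hne : ((m : ℕ∞)) ≠ ⊤ := WithTop.coe_ne_top
    have hsum : (∑' n : ℕ, (if (n : ℕ∞) < (m : ℕ∞) then ENNReal.ofReal (Real.exp (a * n)) else 0))
        = ∑ n ∈ Finset.range m, ENNReal.ofReal (Real.exp (a * n)) := by
      rw [tsum_eq_sum (s := Finset.range m) (fun n hn => if_neg (by
        rw [Finset.mem_range] at hn
        exact not_lt.mpr (by exact_mod_cast not_lt.mp hn)))]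
      exact Finset.sum_congr rfl fun n hn => if_pos (by
        rw [Finset.mem_range] at hn
        exact_mod_cast hn)
    rw [hsum]
    have : eexp a (m : ℕ∞) = ENNReal.ofReal (Real.exp (a * m)) := by
      simp [eexp, hne]
    rw [this]
    exact geom_sum_exp a ha m


lemma vecLaw (hmeas : ∀ i, Measurable (X i))
    (hindep : iIndepFun X P)
    (hident : ∀ i, P.map (X i) = P.map (X 0)) (j m : ℕ) :
    P.map (fun ω (i : Fin m) => X (j + (i : ℕ)) ω) =
      Measure.pi (fun _ : Fin m => P.map (X 0)) := by
  classical
  have h0 : IsProbabilityMeasure (P.map (X 0)) :=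
    Measure.isProbabilityMeasure_map (hmeas 0).aemeasurable
  refine (Measure.pi_eq (μ := fun _ : Fin m => P.map (X 0)) fun s hs => ?_).symm
  rw [Measure.map_apply (measurable_pi_lambda _ fun i => hmeas _) (MeasurableSet.univ_pi hs)]
  set sets : ℕ → Set ℝ := fun k => if h : j ≤ k ∧ k - j < m then s ⟨k - j, h.2⟩ else Set.univ
    with hsets
  have hsets_eq : ∀ i : Fin m, sets (j + (i : ℕ)) = s i := by
    intro i
    have h : j ≤ j + (i : ℕ) ∧ j + (i : ℕ) - j < m := ⟨Nat.le_add_right _ _, by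
      rw [Nat.add_sub_cancel_left]; exact i.isLt⟩
    have h2 : (⟨j + (i : ℕ) - j, h.2⟩ : Fin m) = i := Fin.ext (by simp only [Fin.val_mk]; omega)
    rw [hsets]
    simp only [dif_pos h, h2]
  set e : Fin m → ℕ := fun i => j + (i : ℕ) with he
  have hinj : Set.InjOn e (Finset.univ : Finset (Fin m)) := by
    intro i _ i' _ hii
    simp only [he] at hii
    exact Fin.ext (by omega)
  set S : Finset ℕ := Finset.image e Finset.univ with hS
  have hmeas_sets : ∀ k, k ∈ S → MeasurableSet (sets k) := by
    intro k _
    rw [hsets]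
    dsimp only
    split_ifs with h
    · exact hs _
    · exact MeasurableSet.univ
  have hkey := iIndepFun_iff_measure_inter_preimage_eq_mul.mp hindep S hmeas_sets
  have hpre : (fun ω (i : Fin m) => X (j + (i : ℕ)) ω) ⁻¹' (Set.pi Set.univ s)
      = ⋂ k ∈ S, X k ⁻¹' sets k := by
    ext ω
    simp only [Set.mem_preimage, Set.mem_pi, Set.mem_univ, forall_true_left, Set.mem_iInter,
      hS, Finset.mem_coe, Finset.mem_image, Finset.mem_univ, true_and]
    constructor
    · rintro h k hk
      obtain ⟨i, rfl⟩ := hk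
      rw [hsets_eq i]
      exact h i
    · intro h i
      rw [← hsets_eq i]
      exact h _ ⟨i, rfl⟩
  rw [hpre, hkey]
  rw [hS, Finset.prod_image fun i hi i' hi' hii => hinj (by simpa using hi) (by simpa using hi') hii]
  refine Finset.prod_congr rfl fun i _ => ?_
  rw [hsets_eq i, ← Measure.map_apply (hmeas _) (hs i), hident]

lemma shiftProb (hmeas : ∀ i, Measurable (X i))
    (hindep : iIndepFun X P)
    (hident : ∀ i, P.map (X i) = P.map (X 0)) (z : ℝ) (m j : ℕ) :
    P {ω | ∀ k, 1 ≤ k → k ≤ m → z < ∑ i ∈ Finset.range k, X (j + i) ω} =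
    P {ω | ∀ k, 1 ≤ k → k ≤ m → z < ∑ i ∈ Finset.range k, X (0 + i) ω} := by
  rcases Nat.eq_zero_or_pos m with rfl | hm
  · have huniv : ∀ j' : ℕ,
        {ω | ∀ k, 1 ≤ k → k ≤ 0 → z < ∑ i ∈ Finset.range k, X (j' + i) ω} = Set.univ := by
      intro j'
      ext ω
      simp only [Set.mem_setOf_eq, Set.mem_univ, iff_true]
      intro k hk hk0
      omega
    rw [huniv j, huniv 0]
  · set C : Set (Fin m → ℝ) :=
      {v | ∀ k, 1 ≤ k → k ≤ m → z < ∑ i ∈ Finset.range k, v ⟨i % m, Nat.mod_lt _ hm⟩} with hC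
    have hCm : MeasurableSet C := by
      have : C = ⋂ (k : ℕ), ⋂ (_ : 1 ≤ k), ⋂ (_ : k ≤ m),
          {v : Fin m → ℝ | z < ∑ i ∈ Finset.range k, v ⟨i % m, Nat.mod_lt _ hm⟩} := by
        ext v
        simp only [hC, Set.mem_setOf_eq, Set.mem_iInter]
      rw [this]
      exact MeasurableSet.iInter fun k => MeasurableSet.iInter fun _ => MeasurableSet.iInter fun _ =>
        measurableSet_lt measurable_const (Finset.measurable_sum _ fun i _ => measurable_pi_apply (⟨i % m, Nat.mod_lt _ hm⟩ : Fin m))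
    have key : ∀ j' : ℕ,
        {ω | ∀ k, 1 ≤ k → k ≤ m → z < ∑ i ∈ Finset.range k, X (j' + i) ω} =
          (fun ω (i : Fin m) => X (j' + (i : ℕ)) ω) ⁻¹' C := by
      intro j'
      ext ω
      simp only [Set.mem_setOf_eq, Set.mem_preimage, hC]
      constructor
      · intro h k hk hkm
        calc z < ∑ i ∈ Finset.range k, X (j' + i) ω := h k hk hkm
          _ = _ := Finset.sum_congr rfl fun i hi => by
              rw [Finset.mem_range] at hi
              rw [Nat.mod_eq_of_lt (by omega)]
      · intro h k hk hkm
        calc z < ∑ i ∈ Finset.range k, X (j' + i % m) ω := h k hk hkm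
          _ = _ := Finset.sum_congr rfl fun i hi => by
              rw [Finset.mem_range] at hi
              rw [Nat.mod_eq_of_lt (by omega)]
    rw [key j, key 0,
      ← Measure.map_apply (measurable_pi_lambda _ fun i => hmeas _) hCm,
      ← Measure.map_apply (measurable_pi_lambda _ fun i => hmeas _) hCm,
      vecLaw hmeas hindep hident, vecLaw hmeas hindep hident]

lemma indepFG (hmeas : ∀ i, Measurable (X i))
    (hindep : iIndepFun X P) (n : ℕ) :
    IndepFun (rwS X n) (fun ω (k : ℕ) => ∑ i ∈ Finset.range k, X (n + i) ω) P := by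
  have hle : ∀ i : ℕ, MeasurableSpace.comap (X i) inferInstance ≤ ‹MeasurableSpace Ω› :=
    fun i => (hmeas i).comap_le
  have hind :
      Indep (⨆ i ∈ Set.Iio n, MeasurableSpace.comap (X i) inferInstance)
        (⨆ i ∈ Set.Ici n, MeasurableSpace.comap (X i) inferInstance) P :=
    indep_iSup_of_disjoint hle hindep (Set.Iio_disjoint_Ici le_rfl)
  have hF : Measurable[⨆ i ∈ Set.Iio n, MeasurableSpace.comap (X i) inferInstance] (rwS X n) := by
    refine Finset.measurable_sum _ fun i hi => ?_
    exact Measurable.of_comap_le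
      (le_biSup (fun i => MeasurableSpace.comap (X i) inferInstance)
        (Set.mem_Iio.mpr (Finset.mem_range.mp hi)))
  have hG : Measurable[⨆ i ∈ Set.Ici n, MeasurableSpace.comap (X i) inferInstance]
      (fun ω (k : ℕ) => ∑ i ∈ Finset.range k, X (n + i) ω) := by
    letI : MeasurableSpace Ω := ⨆ i ∈ Set.Ici n, MeasurableSpace.comap (X i) inferInstance
    rw [measurable_pi_iff]
    refine fun k => Finset.measurable_sum _ fun i _ => ?_
    exact Measurable.of_comap_le
      (le_biSup (fun i => MeasurableSpace.comap (X i) inferInstance)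
        (Set.mem_Ici.mpr (Nat.le_add_right _ _)))
  exact indep_of_indep_of_le_right (indep_of_indep_of_le_left hind hF.comap_le) hG.comap_le

lemma infSet_ae_eq (hdrift : ∀ᵐ ω ∂P, Tendsto (fun n => rwS X n ω) atTop atTop) (z : ℝ) :
    P {ω | ∀ k, 1 ≤ k → z < rwS X k ω} =
      P {ω | (z : EReal) < ⨅ (k : ℕ) (_ : 1 ≤ k), (rwS X k ω : EReal)} := by
  refine measure_congr ?_
  filter_upwards [hdrift] with ω hω
  simp only [eq_iff_iff, Set.mem_setOf_eq]
  constructor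
  · intro h
    obtain ⟨N, hN⟩ := Filter.eventually_atTop.mp (hω.eventually_ge_atTop (z + 1))
    set F : Finset ℝ := insert (z + 1) ((Finset.Icc 1 N).image fun k => rwS X k ω) with hF
    have hFne : F.Nonempty := Finset.insert_nonempty _ _
    set w : ℝ := F.min' hFne with hw
    have hzw : z < w := by
      have hwm := Finset.min'_mem F hFne
      rw [← hw] at hwm
      rw [hF, Finset.mem_insert] at hwm
      rcases hwm with h1 | h2
      · linarith [h1]
      · obtain ⟨k, hk, hke⟩ := Finset.mem_image.mp h2
        rw [Finset.mem_Icc] at hk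
        rw [← hke]
        exact h k hk.1
    have hwle : ∀ k, 1 ≤ k → w ≤ rwS X k ω := by
      intro k hk
      rcases le_or_gt k N with hkN | hkN
      · exact Finset.min'_le _ _ (by
          rw [hF]
          exact Finset.mem_insert_of_mem (Finset.mem_image.mpr ⟨k, Finset.mem_Icc.mpr ⟨hk, hkN⟩, rfl⟩))
      · have h1 : w ≤ z + 1 := Finset.min'_le _ _ (by rw [hF]; exact Finset.mem_insert_self _ _)
        exact h1.trans (hN k hkN.le)
    calc (z : EReal) < (w : EReal) := EReal.coe_lt_coe_iff.mpr hzw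
      _ ≤ _ := le_iInf₂ fun k hk => EReal.coe_le_coe_iff.mpr (hwle k hk)
  · intro h k hk
    exact EReal.coe_lt_coe_iff.mp (h.trans_le (iInf₂_le k hk))

lemma tailProb (hmeas : ∀ i, Measurable (X i))
    (hindep : iIndepFun X P)
    (hident : ∀ i, P.map (X i) = P.map (X 0))
    (hdrift : ∀ᵐ ω ∂P, Tendsto (fun n => rwS X n ω) atTop atTop) (z : ℝ) (n : ℕ) :
    P {ω | ∀ k, 1 ≤ k → z < ∑ i ∈ Finset.range k, X (n + i) ω} =
      P {ω | (z : EReal) < ⨅ (k : ℕ) (_ : 1 ≤ k), (rwS X k ω : EReal)} := by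
  have hA : ∀ (j m : ℕ),
      MeasurableSet {ω | ∀ k, 1 ≤ k → k ≤ m → z < ∑ i ∈ Finset.range k, X (j + i) ω} := by
    intro j m
    have : {ω | ∀ k, 1 ≤ k → k ≤ m → z < ∑ i ∈ Finset.range k, X (j + i) ω}
        = ⋂ (k : ℕ), ⋂ (_ : 1 ≤ k), ⋂ (_ : k ≤ m),
          {ω | z < ∑ i ∈ Finset.range k, X (j + i) ω} := by
      ext ω; simp only [Set.mem_setOf_eq, Set.mem_iInter]
    rw [this]
    exact MeasurableSet.iInter fun k => MeasurableSet.iInter fun _ => MeasurableSet.iInter fun _ =>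
      measurableSet_lt measurable_const (Finset.measurable_sum _ fun i _ => hmeas _)
  have hmono : ∀ j : ℕ, Antitone (fun m : ℕ =>
      {ω | ∀ k, 1 ≤ k → k ≤ m → z < ∑ i ∈ Finset.range k, X (j + i) ω}) := by
    intro j m m' hmm ω hω k hk hkm
    exact hω k hk (hkm.trans hmm)
  have hInter : ∀ j : ℕ,
      (⋂ m : ℕ, {ω | ∀ k, 1 ≤ k → k ≤ m → z < ∑ i ∈ Finset.range k, X (j + i) ω})
        = {ω | ∀ k, 1 ≤ k → z < ∑ i ∈ Finset.range k, X (j + i) ω} := by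
    intro j
    ext ω
    simp only [Set.mem_iInter, Set.mem_setOf_eq]
    exact ⟨fun h k hk => h k k hk le_rfl, fun h m k hk _ => h k hk⟩
  have hlim : ∀ j : ℕ, Tendsto
      (fun m : ℕ => P {ω | ∀ k, 1 ≤ k → k ≤ m → z < ∑ i ∈ Finset.range k, X (j + i) ω}) atTop
      (𝓝 (P {ω | ∀ k, 1 ≤ k → z < ∑ i ∈ Finset.range k, X (j + i) ω})) := by
    intro j
    have := tendsto_measure_iInter_atTop (μ := P)
      (s := fun m : ℕ => {ω | ∀ k, 1 ≤ k → k ≤ m → z < ∑ i ∈ Finset.range k, X (j + i) ω})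
      (fun m => (hA j m).nullMeasurableSet) (hmono j) ⟨0, measure_ne_top _ _⟩
    rwa [hInter j] at this
  have heq : ∀ᶠ m in (atTop : Filter ℕ), P {ω | ∀ k, 1 ≤ k → k ≤ m →
      z < ∑ i ∈ Finset.range k, X (n + i) ω} = P {ω | ∀ k, 1 ≤ k → k ≤ m →
      z < ∑ i ∈ Finset.range k, X (0 + i) ω} :=
    Filter.Eventually.of_forall fun m => shiftProb hmeas hindep hident z m n
  have h1 : P {ω | ∀ k, 1 ≤ k → z < ∑ i ∈ Finset.range k, X (n + i) ω}
      = P {ω | ∀ k, 1 ≤ k → z < ∑ i ∈ Finset.range k, X (0 + i) ω} :=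
    tendsto_nhds_unique (hlim n) ((hlim 0).congr' (by
      filter_upwards [heq] with m hm using hm.symm))
  rw [h1]
  have h2 : {ω | ∀ k, 1 ≤ k → z < ∑ i ∈ Finset.range k, X (0 + i) ω}
      = {ω | ∀ k, 1 ≤ k → z < rwS X k ω} := by
    ext ω
    simp only [Set.mem_setOf_eq, rwS, zero_add]
  rw [h2, infSet_ae_eq hdrift]


lemma part1 (hmeas : ∀ i, Measurable (X i))
    (hindep : iIndepFun X P)
    (hident : ∀ i, P.map (X i) = P.map (X 0))
    (hdrift : ∀ᵐ ω ∂P, Tendsto (fun n => rwS X n ω) atTop atTop)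
    {x : ℝ} (hx : 0 ≤ x) (n : ℕ) :
    P {ω | lastExit X x ω = (n : ℕ∞)} =
      ∫⁻ y in Set.Iic x,
        P {ω | ((x - y : ℝ) : EReal) < ⨅ (k : ℕ) (_ : 1 ≤ k), (rwS X k ω : EReal)}
        ∂(P.map (rwS X n)) := by
  classical
  set F : Ω → ℝ := rwS X n with hF
  set G : Ω → ℕ → ℝ := fun ω k => ∑ i ∈ Finset.range k, X (n + i) ω with hG
  have hFm : Measurable F := rwS_measurable hmeas n
  have hGm : Measurable G :=
    measurable_pi_lambda _ fun k => Finset.measurable_sum _ fun i _ => hmeas _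
  set B : Set (ℝ × (ℕ → ℝ)) := {p | p.1 ≤ x ∧ ∀ k, 1 ≤ k → x - p.1 < p.2 k} with hB
  have hBm : MeasurableSet B := by
    have : B = (Prod.fst ⁻¹' Set.Iic x) ∩
        ⋂ (k : ℕ), ⋂ (_ : 1 ≤ k), {p : ℝ × (ℕ → ℝ) | x - p.1 < p.2 k} := by
      ext p
      simp only [hB, Set.mem_setOf_eq, Set.mem_inter_iff, Set.mem_preimage, Set.mem_Iic,
        Set.mem_iInter]
    rw [this]
    exact (measurable_fst measurableSet_Iic).inter
      (MeasurableSet.iInter fun k => MeasurableSet.iInter fun _ =>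
        measurableSet_lt (measurable_const.sub measurable_fst)
          ((measurable_pi_apply k).comp measurable_snd))
  have hset : {ω | lastExit X x ω = (n : ℕ∞)} = (fun ω => (F ω, G ω)) ⁻¹' B := by
    ext ω
    rw [Set.mem_setOf_eq, lastExit_eq_iff hx, Set.mem_preimage]
    simp only [hB, Set.mem_setOf_eq]
    have hsum : ∀ k, rwS X (n + k) ω = F ω + G ω k := fun k => Finset.sum_range_add _ n k
    constructor
    · rintro ⟨h1, h2⟩
      exact ⟨h1, fun k hk => by
        have := h2 k hk
        rw [hsum k] at this
        linarith⟩
    · rintro ⟨h1, h2⟩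
      exact ⟨h1, fun k hk => by
        have := h2 k hk
        rw [hsum k]
        linarith⟩
  have hmap : P.map (fun ω => (F ω, G ω)) = (P.map F).prod (P.map G) :=
    (indepFun_iff_map_prod_eq_prod_map_map hFm.aemeasurable hGm.aemeasurable).mp
      (indepFG hmeas hindep n)
  rw [hset, ← Measure.map_apply (hFm.prodMk hGm) hBm, hmap, Measure.prod_apply hBm]
  have hApre : ∀ y : ℝ, MeasurableSet {t : ℕ → ℝ | ∀ k, 1 ≤ k → x - y < t k} := by
    intro y
    have : {t : ℕ → ℝ | ∀ k, 1 ≤ k → x - y < t k}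
        = ⋂ (k : ℕ), ⋂ (_ : 1 ≤ k), {t : ℕ → ℝ | x - y < t k} := by
      ext t; simp only [Set.mem_setOf_eq, Set.mem_iInter]
    rw [this]
    exact MeasurableSet.iInter fun k => MeasurableSet.iInter fun _ =>
      measurableSet_lt measurable_const (measurable_pi_apply k)
  have hpoint : ∀ y : ℝ, (P.map G) (Prod.mk y ⁻¹' B) = (Set.Iic x).indicator
      (fun y => P {ω | ((x - y : ℝ) : EReal) <
        ⨅ (k : ℕ) (_ : 1 ≤ k), (rwS X k ω : EReal)}) y := by
    intro y
    rcases le_or_gt y x with hy | hy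
    · have hpre : Prod.mk y ⁻¹' B = {t : ℕ → ℝ | ∀ k, 1 ≤ k → x - y < t k} := by
        ext t
        simp only [hB, Set.mem_preimage, Set.mem_setOf_eq, hy, true_and]
      rw [hpre, Set.indicator_of_mem (Set.mem_Iic.mpr hy),
        Measure.map_apply hGm (hApre y)]
      have : G ⁻¹' {t : ℕ → ℝ | ∀ k, 1 ≤ k → x - y < t k}
          = {ω | ∀ k, 1 ≤ k → x - y < ∑ i ∈ Finset.range k, X (n + i) ω} := rfl
      rw [this]
      exact tailProb hmeas hindep hident hdrift (x - y) n
    · have hpre : Prod.mk y ⁻¹' B = ∅ := by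
        ext t
        simp only [hB, Set.mem_preimage, Set.mem_setOf_eq, Set.mem_empty_iff_false, iff_false]
        rintro ⟨h1, -⟩
        exact absurd h1 (not_le.mpr hy)
      rw [hpre, Set.indicator_of_notMem (by simpa using hy), measure_empty]
  rw [lintegral_congr hpoint, lintegral_indicator measurableSet_Iic _]

lemma part3 (hmeas : ∀ i, Measurable (X i)) {a x : ℝ} (ha : 0 < a) (hx : 0 ≤ x) :
    ∫⁻ ω, eexp a (firstPassage X x ω) ∂P =
      1 + ENNReal.ofReal (Real.exp a - 1) *
        ∑' n : ℕ, ENNReal.ofReal (Real.exp (a * n)) * P {ω | ∀ k ≤ n, rwS X k ω ≤ x} := by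
  set A : ℕ → Set Ω := fun n => {ω | ∀ k ≤ n, rwS X k ω ≤ x} with hA
  have hAm : ∀ n, MeasurableSet (A n) := by
    intro n
    have : A n = ⋂ (k : ℕ), ⋂ (_ : k ≤ n), {ω | rwS X k ω ≤ x} := by
      ext ω; simp only [hA, Set.mem_setOf_eq, Set.mem_iInter]
    rw [this]
    exact MeasurableSet.iInter fun k => MeasurableSet.iInter fun _ =>
      measurableSet_le (rwS_measurable hmeas k) measurable_const
  have hpoint : ∀ ω, eexp a (firstPassage X x ω) =
      1 + ENNReal.ofReal (Real.exp a - 1) *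
        ∑' n : ℕ, (A n).indicator (fun _ => ENNReal.ofReal (Real.exp (a * n))) ω := by
    intro ω
    rw [eexp_eq a ha]
    congr 1
    congr 1
    refine tsum_congr fun n => ?_
    rw [Set.indicator_apply]
    exact if_congr (by rw [lt_firstPassage_iff]; rfl) rfl rfl
  calc ∫⁻ ω, eexp a (firstPassage X x ω) ∂P
      = ∫⁻ ω, (1 + ENNReal.ofReal (Real.exp a - 1) *
          ∑' n : ℕ, (A n).indicator (fun _ => ENNReal.ofReal (Real.exp (a * n))) ω) ∂P :=
        lintegral_congr hpoint
    _ = 1 + ENNReal.ofReal (Real.exp a - 1) *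
          ∑' n : ℕ, ENNReal.ofReal (Real.exp (a * n)) * P (A n) := by
        rw [lintegral_add_left measurable_const]
        simp only [lintegral_const, measure_univ, mul_one]
        congr 1
        rw [lintegral_const_mul _ (Measurable.ennreal_tsum fun n =>
          measurable_const.indicator (hAm n))]
        congr 1
        rw [lintegral_tsum fun n => (measurable_const.indicator (hAm n)).aemeasurable]
        refine tsum_congr fun n => ?_
        rw [lintegral_indicator (hAm n) _, setLIntegral_const]


end AuxLemmas

/-- If `S_n → ∞` a.s., then for every `x ≥ 0` and `n ∈ ℕ₀`,
`P{ρ(x) = n} = ∫_{(-∞,x]} P{inf_{k≥1} S_k > x - y} P{S_n ∈ dy}`, and in particular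
`P{ρ(x) = n} ≤ P{S_n ≤ x}`. Moreover, for every `a > 0` and `x ≥ 0`,
`E e^{aτ(x)} = 1 + (e^a - 1) Σ_{n≥0} e^{an} P{max_{0≤k≤n} S_k ≤ x}`
(both sides possibly infinite). -/
theorem lastExit_distribution_and_firstPassage_series
    {Ω : Type*} [MeasurableSpace Ω] (P : Measure Ω) [IsProbabilityMeasure P]
    (X : ℕ → Ω → ℝ) (hmeas : ∀ i, Measurable (X i))
    (hindep : iIndepFun X P)
    (hident : ∀ i, P.map (X i) = P.map (X 0))
    (hdrift : ∀ᵐ ω ∂P, Tendsto (fun n => rwS X n ω) atTop atTop) :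
    (∀ x ≥ (0:ℝ), ∀ n : ℕ,
      P {ω | lastExit X x ω = (n : ℕ∞)} =
        ∫⁻ y in Set.Iic x,
          P {ω | ((x - y : ℝ) : EReal) < ⨅ (k : ℕ) (_ : 1 ≤ k), (rwS X k ω : EReal)}
          ∂(P.map (rwS X n))) ∧
    (∀ x ≥ (0:ℝ), ∀ n : ℕ,
      P {ω | lastExit X x ω = (n : ℕ∞)} ≤ P {ω | rwS X n ω ≤ x}) ∧
    (∀ a > (0:ℝ), ∀ x ≥ (0:ℝ),
      expMoment P a (firstPassage X x) =
        1 + ENNReal.ofReal (Real.exp a - 1) *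
          ∑' n : ℕ, ENNReal.ofReal (Real.exp (a * n)) * P {ω | ∀ k ≤ n, rwS X k ω ≤ x}) := by
  refine ⟨fun x hx n => part1 hmeas hindep hident hdrift hx n,
    fun x hx n => measure_mono fun ω h => ((lastExit_eq_iff hx).mp h).1,
    fun a ha x hx => part3 hmeas ha hx⟩
end
end
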